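/- Let X_B be an 𝒳-resolution of an object B of 𝒜 and let Y be a bounded cochain complex with all terms in 𝒳. Then every chain map Y → X_B is null-homotopic; that is, Hom_{K^-(𝒜)}(Y, X_B) = 0 in the homotopy category of bounded-above complexes. -/

import Mathlib

open CategoryTheory Limits

universe v u

variable {A : Type u} [Category.{v} A] [Preadditive A]

/-- An `𝒳`-resolution of `B`. -/
structure IsXResolution (𝒳 : A → Prop) (B : A) (C : CochainComplex A ℤ) where
  degZeroIso : C.X 0 ≅ B
  isZero_of_pos : ∀ i : ℤ, 0 < i → Limits.IsZero (C.X i)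
  mem_of_neg : ∀ i : ℤ, i < 0 → 𝒳 (C.X i)
  acyclic : ∀ (T : A), 𝒳 T → ∀ n : ℤ,
    (((preadditiveCoyoneda.obj (Opposite.op T)).mapHomologicalComplex
      (ComplexShape.up ℤ)).obj C).ExactAt n

/-- Auxiliary lifting lemma: a cycle in `Hom(T, XB)` is a boundary, by acyclicity. -/
lemma XRes.lift_step {𝒳 : A → Prop} {B : A} {XB : CochainComplex A ℤ}
    (hXB : IsXResolution 𝒳 B XB) {T : A} (hT : 𝒳 T) (i : ℤ)
    (g : T ⟶ XB.X (i+1)) (hg : g ≫ XB.d (i+1) (i+1+1) = 0) :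
    ∃ s : T ⟶ XB.X i, s ≫ XB.d i (i+1) = g := by
  have h := hXB.acyclic T hT (i+1)
  rw [HomologicalComplex.exactAt_iff' _ i (i+1) (i+1+1) (by simp) (by simp)] at h
  rw [ShortComplex.ab_exact_iff] at h
  obtain ⟨s, hs⟩ := h g hg
  exact ⟨s, hs⟩

/-- Auxiliary recursively defined homotopy data, built by descending induction. -/
noncomputable def XRes.homF {𝒳 : A → Prop} {B : A} {XB : CochainComplex A ℤ}
    (hXB : IsXResolution 𝒳 B XB) (Y : CochainComplex A ℤ)
    (hYmem : ∀ i : ℤ, 𝒳 (Y.X i)) (b : ℤ) (hb : ∀ i : ℤ, b < i → IsZero (Y.X i))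
    (f : Y ⟶ XB) : ∀ i : ℤ,
    Σ' p : ((Y.X (i+1) ⟶ XB.X i) × (Y.X (i+1+1) ⟶ XB.X (i+1))),
      p.1 ≫ XB.d i (i+1) = f.f (i+1) - Y.d (i+1) (i+1+1) ≫ p.2 := fun i =>
  if h : b ≤ i then
    ⟨(0, 0), by
      have h1 : f.f (i+1) = 0 := (hb (i+1) (by omega)).eq_of_src _ _
      simp [h1]⟩
  else
    have P := XRes.homF hXB Y hYmem b hb f (i+1)
    have hcyc : (f.f (i+1) - Y.d (i+1) (i+1+1) ≫ P.1.1) ≫ XB.d (i+1) (i+1+1) = 0 := by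
      have hP := P.2
      rw [Preadditive.sub_comp, Category.assoc, hP, f.comm (i+1) (i+1+1)]
      simp [Preadditive.comp_sub, ← Category.assoc, Y.d_comp_d]
    ⟨(Classical.choose (XRes.lift_step hXB (hYmem (i+1)) i _ hcyc), P.1.1),
      Classical.choose_spec (XRes.lift_step hXB (hYmem (i+1)) i _ hcyc)⟩
  termination_by i => (b - i).toNat
  decreasing_by simp_wf; omega

lemma XRes.homF_glue {𝒳 : A → Prop} {B : A} {XB : CochainComplex A ℤ}
    (hXB : IsXResolution 𝒳 B XB) (Y : CochainComplex A ℤ)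
    (hYmem : ∀ i : ℤ, 𝒳 (Y.X i)) (b : ℤ) (hb : ∀ i : ℤ, b < i → IsZero (Y.X i))
    (f : Y ⟶ XB) (i : ℤ) :
    (XRes.homF hXB Y hYmem b hb f i).1.2 = (XRes.homF hXB Y hYmem b hb f (i+1)).1.1 := by
  by_cases h : b ≤ i
  · rw [XRes.homF, dif_pos h, XRes.homF, dif_pos (by omega : b ≤ i + 1)]
  · rw [XRes.homF, dif_neg h]

/-- Lemma 3.2(1): if `X_B` is an `𝒳`-resolution of `B` and `Y` is a bounded complex with
all terms in `𝒳`, then every chain map `Y ⟶ X_B` is null-homotopic; that is,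
`Hom_{K^-(𝒜)}(Y, X_B) = 0`. -/
theorem chainMap_to_resolution_nullHomotopic {𝒳 : A → Prop} {B : A}
    {XB : CochainComplex A ℤ} (hXB : IsXResolution 𝒳 B XB)
    (Y : CochainComplex A ℤ)
    (hYmem : ∀ i : ℤ, 𝒳 (Y.X i))
    (hYbdd : ∃ a b : ℤ, ∀ i : ℤ, (i < a ∨ b < i) → Limits.IsZero (Y.X i))
    (f : Y ⟶ XB) :
    Nonempty (Homotopy f 0) := by
  obtain ⟨a, b, hbdd⟩ := hYbdd
  have hb : ∀ i : ℤ, b < i → IsZero (Y.X i) := fun i h => hbdd i (Or.inr h)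
  set s : ∀ i : ℤ, Y.X (i+1) ⟶ XB.X i := fun i => (XRes.homF hXB Y hYmem b hb f i).1.1
    with hsdef
  have hs : ∀ i : ℤ, s i ≫ XB.d i (i+1) = f.f (i+1) - Y.d (i+1) (i+1+1) ≫ s (i+1) := by
    intro i
    have := (XRes.homF hXB Y hYmem b hb f i).2
    rwa [XRes.homF_glue hXB Y hYmem b hb f i] at this
  refine ⟨{
    hom := fun i j => if h : j + 1 = i then eqToHom (congrArg Y.X h.symm) ≫ s j else 0
    zero := fun i j hij => dif_neg hij
    comm := fun i => ?_ }⟩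
  obtain ⟨j, rfl⟩ : ∃ j, i = j + 1 := ⟨i - 1, by omega⟩
  rw [dNext_eq _ (show (ComplexShape.up ℤ).Rel (j+1) (j+1+1) from rfl),
      prevD_eq _ (show (ComplexShape.up ℤ).Rel j (j+1) from rfl)]
  simp only [dif_pos rfl, dite_true, eqToHom_refl, Category.id_comp,
    HomologicalComplex.zero_f_apply, add_zero]
  rw [hs j]
  abel
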